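/- Let D be a pretriangulated category equipped with a t-structure (U, V) and let H = U ∩ V[1] be its heart, regarded as a full subcategory of D. Then a morphism f : X → Y between objects of H is a monomorphism in the category H if and only if the cone of f in D belongs to H. -/

import Mathlib

open CategoryTheory Limits Pretriangulated

section Aux

variable {D : Type*} [Category D]
    [Preadditive D] [HasZeroObject D] [HasShift D ℤ]
    [∀ n : ℤ, (shiftFunctor D n).Additive] [Pretriangulated D]
    (U V : Set D)

set_option linter.unusedSectionVars false in
/-- maps from `U` to `V` vanish -/
theorem aux_hv (hV : V = {X : D | ∀ A ∈ U, ∀ f : A ⟶ X, f = 0})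
    {A B : D} (hA : A ∈ U) (hB : B ∈ V) (φ : A ⟶ B) : φ = 0 := by
  subst hV; exact hB A hA φ

/-- maps from `A⟦1⟧` (`A ∈ U`) to `W` with `W⟦-1⟧ ∈ V` vanish -/
theorem aux_hv1 (hV : V = {X : D | ∀ A ∈ U, ∀ f : A ⟶ X, f = 0})
    {A W : D} (hA : A ∈ U) (hW : W⟦(-1 : ℤ)⟧ ∈ V) (φ : A⟦(1 : ℤ)⟧ ⟶ W) : φ = 0 := by
  have hψ : (shiftShiftNeg A (1 : ℤ)).inv ≫ (shiftFunctor D (-1 : ℤ)).map φ = 0 :=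
    aux_hv U V hV hA hW _
  have h2 : (shiftFunctor D (-1 : ℤ)).map φ = 0 := by
    rw [← cancel_epi (shiftShiftNeg A (1 : ℤ)).inv, hψ, comp_zero]
  apply (shiftFunctor D (-1 : ℤ)).map_injective
  rw [h2, Functor.map_zero]

/-- `U` is closed under extensions -/
theorem aux_extU
    (hUiso : ∀ (Z Z' : D), (Z ≅ Z') → Z ∈ U → Z' ∈ U)
    (hV : V = {X : D | ∀ A ∈ U, ∀ f : A ⟶ X, f = 0})
    (hU : ∀ X ∈ U, X⟦(1 : ℤ)⟧ ∈ U)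
    (htri : ∀ X : D, ∃ (A B : D) (f : A ⟶ X) (g : X ⟶ B) (h : B ⟶ A⟦(1 : ℤ)⟧),
      A ∈ U ∧ B ∈ V ∧ Triangle.mk f g h ∈ (distTriang D))
    (T : Triangle D) (hT : T ∈ distTriang D)
    (h1 : T.obj₁ ∈ U) (h3 : T.obj₃ ∈ U) : T.obj₂ ∈ U := by
  obtain ⟨A', B'', i, q, δ, hA', hB'', hT'⟩ := htri T.obj₂
  -- the map `q : T.obj₂ ⟶ B''` is zero
  have hq : q = 0 := by
    have h0 : T.mor₁ ≫ q = 0 := aux_hv U V hV h1 hB'' _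
    obtain ⟨c, hc⟩ := Triangle.yoneda_exact₂ T hT q h0
    rw [hc, aux_hv U V hV h3 hB'' c, comp_zero]
  -- hence `B''` is zero
  have hB0 : IsZero B'' := by
    obtain ⟨r, hr⟩ := Triangle.yoneda_exact₃ (Triangle.mk i q δ) hT' (𝟙 B'')
      (by show q ≫ 𝟙 B'' = 0; rw [hq, zero_comp])
    have hr0 := aux_hv U V hV (hU A' hA') hB'' r
    exact (IsZero.iff_id_eq_zero B'').2 (hr.trans (by rw [hr0]; exact comp_zero))
  -- hence `i` is an isomorphism
  have : IsIso ((Triangle.mk i q δ).mor₁) :=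
    (Triangle.isZero₃_iff_isIso₁ _ hT').1 hB0
  exact hUiso A' T.obj₂ (@asIso _ _ _ _ ((Triangle.mk i q δ).mor₁) this) hA'

end Aux

/-- Let `D` be a pretriangulated category with a t-structure `(U, V)` and
let `H = U ∩ V[1]` be its heart. A morphism `f : X ⟶ Y` between objects of `H` is a
monomorphism in `H` if and only if the cone of `f` in `D` belongs to `H`. -/
theorem stmt_3 {D : Type*} [Category D]
    [Preadditive D] [HasZeroObject D] [HasShift D ℤ]
    [∀ n : ℤ, (shiftFunctor D n).Additive] [Pretriangulated D]
    -- the t-structure `(U, V)`: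
    (U V : Set D)
    (hUiso : ∀ (Z Z' : D), (Z ≅ Z') → Z ∈ U → Z' ∈ U)
    (hV : V = {X : D | ∀ A ∈ U, ∀ f : A ⟶ X, f = 0})
    (hU : ∀ X ∈ U, X⟦(1 : ℤ)⟧ ∈ U)
    (htri : ∀ X : D, ∃ (A B : D) (f : A ⟶ X) (g : X ⟶ B) (h : B ⟶ A⟦(1 : ℤ)⟧),
      A ∈ U ∧ B ∈ V ∧ Triangle.mk f g h ∈ (distTriang D))
    -- the heart `H = U ∩ V[1]`:
    (heart : Set D) (hheart : heart = {X : D | X ∈ U ∧ X⟦(-1 : ℤ)⟧ ∈ V})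
    -- a morphism `f` of the heart and a cone `Z` of `f` in `D`:
    (X Y : ObjectProperty.FullSubcategory (· ∈ heart)) (f : X ⟶ Y) (Z : D)
    (g : Y.obj ⟶ Z) (h : Z ⟶ X.obj⟦(1 : ℤ)⟧)
    (hT : Triangle.mk ((ObjectProperty.ι (· ∈ heart)).map f) g h ∈ (distTriang D)) :
    Mono f ↔ Z ∈ heart := by
  have hmem : ∀ W : D, W ∈ heart ↔ (W ∈ U ∧ W⟦(-1 : ℤ)⟧ ∈ V) := by
    rw [hheart]; intro W; exact Iff.rfl
  set f' : X.obj ⟶ Y.obj := (ObjectProperty.ι (· ∈ heart)).map f with hf'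
  set T : Triangle D := Triangle.mk f' g h with hTdef
  have hXh := (hmem _).1 X.property
  have hYh := (hmem _).1 Y.property
  have hXU : X.obj ∈ U := hXh.1
  have hXV : X.obj⟦(-1 : ℤ)⟧ ∈ V := hXh.2
  have hYU : Y.obj ∈ U := hYh.1
  have hYV : Y.obj⟦(-1 : ℤ)⟧ ∈ V := hYh.2
  constructor
  · -- `Mono f → Z ∈ heart`
    intro hf
    -- key: any map `a : A ⟶ X.obj` with `A ∈ U` and `a ≫ f' = 0` vanishes
    have key : ∀ (A : D), A ∈ U → ∀ (a : A ⟶ X.obj), a ≫ f' = 0 → a = 0 := by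
      intro A hA a ha
      obtain ⟨A₁, B₁, i₀, q₀, δ₀, hA₁, hB₁, hT₀⟩ := htri (A⟦(-1 : ℤ)⟧)
      set T₁ : Triangle D :=
        (CategoryTheory.shiftFunctor (Triangle D) (1 : ℤ)).obj (Triangle.mk i₀ q₀ δ₀) with hT₁def
      have hT₁ : T₁ ∈ distTriang D := Triangle.shift_distinguished _ hT₀ 1
      -- `T₁` has objects `A₁⟦1⟧`, `A⟦-1⟧⟦1⟧`, `B₁⟦1⟧`
      have e : (A⟦(-1 : ℤ)⟧⟦(1 : ℤ)⟧ : D) ≅ A := shiftNegShift A (1 : ℤ)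
      set a₂ : T₁.obj₂ ⟶ X.obj := e.hom ≫ a with ha₂def
      have h0 : T₁.mor₁ ≫ a₂ = 0 :=
        aux_hv1 U V hV hA₁ hXV (T₁.mor₁ ≫ a₂)
      obtain ⟨abar, habar⟩ := Triangle.yoneda_exact₂ T₁ hT₁ a₂ h0
      -- `B₁⟦1⟧` belongs to the heart
      have hBU : (B₁⟦(1 : ℤ)⟧ : D) ∈ U := by
        refine aux_extU U V hUiso hV hU htri T₁.rotate (rot_of_distTriang _ hT₁) ?_ ?_
        · exact hUiso A _ e.symm hA
        · exact hU _ (hU _ hA₁)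
      have hBheart : (B₁⟦(1 : ℤ)⟧ : D) ∈ heart := by
        refine (hmem _).2 ⟨hBU, ?_⟩
        rw [hV]
        intro A' hA' φ
        have : (φ ≫ (shiftShiftNeg B₁ (1 : ℤ)).hom) = 0 := aux_hv U V hV hA' hB₁ _
        rw [← cancel_mono (shiftShiftNeg B₁ (1 : ℤ)).hom, this, zero_comp]
      -- `abar ≫ f' = 0`
      have habf : abar ≫ f' = 0 := by
        have h1 : T₁.mor₂ ≫ (abar ≫ f') = 0 := by
          rw [← Category.assoc, ← habar, ha₂def]
          exact (Category.assoc e.hom a f').trans (by rw [ha]; exact comp_zero)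
        obtain ⟨c, hc⟩ := Triangle.yoneda_exact₃ T₁ hT₁ (abar ≫ f') h1
        have hc0 : c = 0 := aux_hv1 U V hV (hU _ hA₁) hYV c
        rw [hc, hc0, comp_zero]
      -- use that `f` is a monomorphism in the heart
      set W : ObjectProperty.FullSubcategory (· ∈ heart) := ⟨B₁⟦(1 : ℤ)⟧, hBheart⟩ with hWdef
      have habar0 : abar = 0 := by
        have := hf.right_cancellation (Z := W) (ObjectProperty.homMk abar) (ObjectProperty.homMk (0 : W.obj ⟶ X.obj)) (InducedCategory.hom_ext (by
          show abar ≫ f' = (0 : W.obj ⟶ X.obj) ≫ f'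
          rw [habf]; exact zero_comp.symm))
        exact congrArg InducedCategory.Hom.hom this
      have ha₂0 : a₂ = 0 := by rw [habar, habar0, comp_zero]
      rw [← cancel_epi e.hom, comp_zero]
      exact ha₂0
    -- `Z ∈ U`:
    have hZU : Z ∈ U := by
      refine aux_extU U V hUiso hV hU htri T.rotate (rot_of_distTriang _ hT) hYU ?_
      exact hU _ hXU
    -- `Z⟦-1⟧ ∈ V`:
    have hZV : Z⟦(-1 : ℤ)⟧ ∈ V := by
      rw [hV]
      intro A hA b
      set T2 : Triangle D := T.invRotate with hT2def
      have hT2 : T2 ∈ distTriang D := inv_rot_of_distTriang _ hT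
      set T3 : Triangle D := T2.invRotate with hT3def
      have hT3 : T3 ∈ distTriang D := inv_rot_of_distTriang _ hT2
      -- `T2 : Z⟦-1⟧ ⟶ X.obj ⟶ Y.obj`, `T3 : Y.obj⟦-1⟧ ⟶ Z⟦-1⟧ ⟶ X.obj`
      have ha : (b ≫ T2.mor₁) ≫ f' = 0 := by
        have : T2.mor₁ ≫ T2.mor₂ = 0 := comp_distTriang_mor_zero₁₂ _ hT2
        refine (Category.assoc b T2.mor₁ f').trans ?_
        have h2 : T2.mor₂ = f' := rfl
        rw [← h2]
        exact (congrArg (fun x : T2.obj₁ ⟶ T2.obj₃ => b ≫ x) this).trans comp_zero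
      have hb := key A hA (b ≫ T2.mor₁) ha
      have hbT3 : b ≫ T3.mor₂ = 0 := hb
      obtain ⟨c, hc⟩ := Triangle.coyoneda_exact₂ T3 hT3 b hbT3
      have hc0 : c = 0 := aux_hv U V hV hA hYV c
      rw [hc, hc0]
      exact zero_comp
    exact (hmem Z).2 ⟨hZU, hZV⟩
  · -- `Z ∈ heart → Mono f`
    intro hZ
    have hZV : Z⟦(-1 : ℤ)⟧ ∈ V := ((hmem Z).1 hZ).2
    constructor
    intro W g₁ g₂ hgg
    set T2 : Triangle D := T.invRotate with hT2def
    have hT2 : T2 ∈ distTriang D := inv_rot_of_distTriang _ hT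
    set a : W.obj ⟶ X.obj := g₁.hom - g₂.hom with hadef
    have ha : a ≫ T2.mor₂ = 0 := by
      have h2 : T2.mor₂ = f' := rfl
      rw [h2, hadef]
      refine (Preadditive.sub_comp g₁.hom g₂.hom f').trans (sub_eq_zero.mpr ?_)
      exact congrArg InducedCategory.Hom.hom hgg
    obtain ⟨b, hb⟩ := Triangle.coyoneda_exact₂ T2 hT2 a ha
    have hb0 : b = 0 := aux_hv U V hV ((hmem _).1 W.property).1 hZV b
    have ha0 : a = 0 := by rw [hb, hb0]; exact zero_comp
    have h2 : a = 0 := ha0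
    rw [hadef] at h2
    exact InducedCategory.hom_ext (sub_eq_zero.mp h2)
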